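/- arXiv:1902.06780 — 2 statements merged into one kernel-verified Lean document; each statement's English description precedes it below -/
import Mathlib

section
/- If σ-algebras 𝒴_n → 𝒴 in L¹ and random variables Z_n → Z in L¹ (with Z ∈ L¹(𝒴)), then E[Z_n | 𝒴_n] → E[Z | 𝒴] = Z in L¹. -/
open MeasureTheory Filter
open scoped ENNReal Topology

/-- If σ-algebras `𝒴ₙ → 𝒴` in `L¹` and random variables `Zₙ → Z`
in `L¹` with `Z ∈ L¹(𝒴)`, then `E[Zₙ|𝒴ₙ] → E[Z|𝒴] = Z` in `L¹`. -/
theorem stmt9 {Ω : Type*} {mΩ : MeasurableSpace Ω} (μ : Measure Ω) [IsProbabilityMeasure μ]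
    (𝒴n : ℕ → MeasurableSpace Ω) (h𝒴n : ∀ n, 𝒴n n ≤ mΩ)
    (𝒴 : MeasurableSpace Ω) (h𝒴 : 𝒴 ≤ mΩ)
    (hconv : ∀ Y : Ω → ℝ, StronglyMeasurable[𝒴] Y → Integrable Y μ →
      Tendsto (fun n => eLpNorm ((μ[Y | 𝒴n n]) - Y) 1 μ) atTop (nhds 0))
    (Zn : ℕ → Ω → ℝ) (Z : Ω → ℝ)
    (hZmeas : StronglyMeasurable[𝒴] Z) (hZint : Integrable Z μ)
    (hZnint : ∀ n, Integrable (Zn n) μ)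
    (hZconv : Tendsto (fun n => eLpNorm (Zn n - Z) 1 μ) atTop (nhds 0)) :
    Tendsto (fun n => eLpNorm ((μ[Zn n | 𝒴n n]) - Z) 1 μ) atTop (nhds 0) := by
  have hYZ := hconv Z hZmeas hZint
  have hbound : ∀ n, eLpNorm ((μ[Zn n | 𝒴n n]) - Z) 1 μ ≤
      eLpNorm (Zn n - Z) 1 μ + eLpNorm ((μ[Z | 𝒴n n]) - Z) 1 μ := by
    intro n
    have hsub : μ[Zn n - Z | 𝒴n n] =ᵐ[μ] μ[Zn n | 𝒴n n] - μ[Z | 𝒴n n] :=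
      condExp_sub (hZnint n) hZint _
    have heq : (μ[Zn n | 𝒴n n]) - Z =ᵐ[μ]
        (μ[Zn n - Z | 𝒴n n]) + ((μ[Z | 𝒴n n]) - Z) := by
      filter_upwards [hsub] with ω hω
      simp only [Pi.add_apply, Pi.sub_apply] at *
      rw [hω]; ring
    calc eLpNorm ((μ[Zn n | 𝒴n n]) - Z) 1 μ
        = eLpNorm ((μ[Zn n - Z | 𝒴n n]) + ((μ[Z | 𝒴n n]) - Z)) 1 μ :=
          eLpNorm_congr_ae heq
      _ ≤ eLpNorm (μ[Zn n - Z | 𝒴n n]) 1 μ + eLpNorm ((μ[Z | 𝒴n n]) - Z) 1 μ := by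
          refine eLpNorm_add_le ?_ ?_ le_rfl
          · exact (stronglyMeasurable_condExp.mono (h𝒴n n)).aestronglyMeasurable
          · exact ((stronglyMeasurable_condExp.mono (h𝒴n n)).aestronglyMeasurable.sub
              (hZmeas.mono h𝒴).aestronglyMeasurable)
      _ ≤ eLpNorm (Zn n - Z) 1 μ + eLpNorm ((μ[Z | 𝒴n n]) - Z) 1 μ := by
          gcongr
          exact eLpNorm_one_condExp_le_eLpNorm _
  have hsum : Tendsto (fun n => eLpNorm (Zn n - Z) 1 μ + eLpNorm ((μ[Z | 𝒴n n]) - Z) 1 μ)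
      atTop (nhds 0) := by
    simpa using Tendsto.add hZconv hYZ
  exact tendsto_of_tendsto_of_tendsto_of_le_of_le tendsto_const_nhds hsum
    (fun n => zero_le) hbound
end

section
/- Let X be a càdlàg process such that ℙ(ΔX_t ≠ 0) = 0 for every fixed t, and let X^n be the discretization X^n_t = Σ_i X_{t_i^n} 1_{[t_i^n, t_{i+1}^n)}(t) along a refining sequence of subdivisions with mesh → 0. Then X^n_t → X_{t⁻} = X_t almost surely for each fixed t, and consequently the natural filtrations satisfy ℋ^n_{t⁻} → ℋ_{t⁻} in L² (X is of class 𝕏). -/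
open MeasureTheory Filter Set
open scoped ENNReal Topology

/-- The natural σ-algebra of a real process strictly before time `t`. -/
def naturalσlt {Ω : Type*} (X : ℝ → Ω → ℝ) (t : ℝ) : MeasurableSpace Ω :=
  ⨆ s ∈ Set.Ico (0 : ℝ) t, MeasurableSpace.comap (fun ω => X s ω) inferInstance


lemma integrable_mul_of_memL2 {α : Type*} {m0 : MeasurableSpace α} {μ : Measure α}
    {f g : α → ℝ} (hf : MemLp f 2 μ) (hg : MemLp g 2 μ) : Integrable (f * g) μ := by
  refine (hf.integrable_sq.add hg.integrable_sq).mono'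
    (hf.aestronglyMeasurable.mul hg.aestronglyMeasurable) ?_
  filter_upwards with x
  simp only [Pi.mul_apply, Pi.add_apply, Real.norm_eq_abs, abs_mul]
  nlinarith [sq_nonneg (|f x| - |g x|), sq_abs (f x), sq_abs (g x), abs_nonneg (f x),
    abs_nonneg (g x)]

lemma condexp_L2_aux {α : Type*} {m m0 : MeasurableSpace α} (hm : m ≤ m0) (μ : Measure α)
    [IsFiniteMeasure μ] {Y : α → ℝ} (hY : MemLp Y 2 μ) :
    MemLp (μ[Y|m]) 2 μ ∧ eLpNorm (μ[Y|m]) 2 μ ≤ eLpNorm Y 2 μ := by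
  set f : Lp ℝ 2 μ := hY.toLp Y with hf
  have hfY : f =ᵐ[μ] Y := hY.coeFn_toLp
  have hcond : (condExpL2 ℝ ℝ hm f : α → ℝ) =ᵐ[μ] μ[Y|m] := by
    refine ae_eq_condExp_of_forall_setIntegral_eq hm (hY.integrable one_le_two) ?_ ?_ ?_
    · intro s _ _
      exact (integrable_condExpL2_of_isFiniteMeasure hm).integrableOn
    · intro s hs hμs
      rw [integral_condExpL2_eq hm f hs hμs.ne]
      exact setIntegral_congr_ae (hm s hs) (hfY.mono fun x hx _ => hx)
    · exact aestronglyMeasurable_condExpL2 hm f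
  constructor
  · exact (Lp.memLp ((condExpL2 ℝ ℝ hm f : lpMeas ℝ ℝ m 2 μ) : Lp ℝ 2 μ)).ae_eq hcond
  · calc eLpNorm (μ[Y|m]) 2 μ
        = eLpNorm (condExpL2 ℝ ℝ hm f : α → ℝ) 2 μ := (eLpNorm_congr_ae hcond).symm
      _ ≤ eLpNorm (f : α → ℝ) 2 μ := eLpNorm_condExpL2_le hm f
      _ = eLpNorm Y 2 μ := eLpNorm_congr_ae hfY

lemma sq_eLpNorm_two {α : Type*} {m0 : MeasurableSpace α} {μ : Measure α}
    {f : α → ℝ} (hf : MemLp f 2 μ) :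
    eLpNorm f 2 μ ^ 2 = ENNReal.ofReal (∫ x, (f x) ^ 2 ∂μ) := by
  rw [hf.eLpNorm_eq_integral_rpow_norm two_ne_zero ENNReal.ofNat_ne_top]
  have h2 : (2 : ℝ≥0∞).toReal = 2 := by simp
  rw [h2]
  have hint : ∀ x, ‖f x‖ ^ (2 : ℝ) = (f x) ^ 2 := by
    intro x
    rw [show ((2:ℝ)) = ((2:ℕ):ℝ) by norm_num, Real.rpow_natCast]
    rw [Real.norm_eq_abs, sq_abs]
  simp_rw [hint]
  rw [← ENNReal.ofReal_pow (by positivity)]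
  congr 1
  have hnn : 0 ≤ ∫ x, (f x) ^ 2 ∂μ := integral_nonneg fun x => sq_nonneg _
  rw [show ((2:ℝ))⁻¹ = (1:ℝ)/2 by norm_num]
  rw [← Real.rpow_natCast ((∫ x, (f x)^2 ∂μ) ^ ((1:ℝ)/2)) 2, ← Real.rpow_mul hnn]
  norm_num
lemma levyL2 {Ω : Type*} {m0 : MeasurableSpace Ω} {μ : Measure Ω} [IsProbabilityMeasure μ]
    (ℱ : Filtration ℕ m0) {Y : Ω → ℝ}
    (hYm : StronglyMeasurable[⨆ n, ℱ n] Y) (hY : MemLp Y 2 μ) :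
    Tendsto (fun n => eLpNorm ((μ[Y|ℱ n]) - Y) 2 μ) atTop (𝓝 0) := by
  have hYint : Integrable Y μ := hY.integrable one_le_two
  have hae := hYint.tendsto_ae_condExp hYm
  have hP : ∀ n, MemLp (μ[Y|ℱ n]) 2 μ := fun n => (condexp_L2_aux (ℱ.le n) μ hY).1
  have hPle : ∀ n, eLpNorm (μ[Y|ℱ n]) 2 μ ≤ eLpNorm Y 2 μ :=
    fun n => (condexp_L2_aux (ℱ.le n) μ hY).2
  have key : ∀ n, ∫ x, (μ[Y|ℱ n]) x * Y x ∂μ = ∫ x, ((μ[Y|ℱ n]) x) ^ 2 ∂μ := by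
    intro n
    have hPY : Integrable ((μ[Y|ℱ n]) * Y) μ := integrable_mul_of_memL2 (hP n) hY
    have h1 : μ[(μ[Y|ℱ n]) * Y | ℱ n] =ᵐ[μ] (μ[Y|ℱ n]) * (μ[Y|ℱ n]) :=
      condExp_mul_of_stronglyMeasurable_left stronglyMeasurable_condExp hPY hYint
    calc ∫ x, (μ[Y|ℱ n]) x * Y x ∂μ = ∫ x, ((μ[Y|ℱ n]) * Y) x ∂μ := rfl
      _ = ∫ x, (μ[(μ[Y|ℱ n]) * Y|ℱ n]) x ∂μ := (integral_condExp (ℱ.le n)).symm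
      _ = ∫ x, ((μ[Y|ℱ n]) * (μ[Y|ℱ n])) x ∂μ := integral_congr_ae h1
      _ = ∫ x, ((μ[Y|ℱ n]) x) ^ 2 ∂μ := by simp [sq]
  have hreal : ∀ n, ∫ x, (((μ[Y|ℱ n]) - Y) x) ^ 2 ∂μ
      = ∫ x, (Y x) ^ 2 ∂μ - ∫ x, ((μ[Y|ℱ n]) x) ^ 2 ∂μ := by
    intro n
    have hPY : Integrable (fun x => (μ[Y|ℱ n]) x * Y x) μ := integrable_mul_of_memL2 (hP n) hY
    have h1 : (fun x => (((μ[Y|ℱ n]) - Y) x) ^ 2)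
        = fun x => ((μ[Y|ℱ n]) x ^ 2 + Y x ^ 2) - 2 * ((μ[Y|ℱ n]) x * Y x) := by
      funext x; simp only [Pi.sub_apply]; ring
    have hadd : Integrable (fun x => (μ[Y|ℱ n]) x ^ 2 + Y x ^ 2) μ :=
      ((hP n).integrable_sq).add hY.integrable_sq
    rw [h1, integral_sub hadd (hPY.const_mul 2),
      integral_add ((hP n).integrable_sq) (hY.integrable_sq), integral_const_mul 2 _, key n]
    ring
  have hLt : eLpNorm Y 2 μ ^ 2 ≠ ∞ := ENNReal.pow_ne_top hY.2.ne
  have hEL : ∀ n, eLpNorm (μ[Y|ℱ n]) 2 μ ^ 2 ≤ eLpNorm Y 2 μ ^ 2 :=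
    fun n => pow_le_pow_left' (hPle n) 2
  have hsq : ∀ n, eLpNorm ((μ[Y|ℱ n]) - Y) 2 μ ^ 2
      = eLpNorm Y 2 μ ^ 2 - eLpNorm (μ[Y|ℱ n]) 2 μ ^ 2 := by
    intro n
    rw [sq_eLpNorm_two ((hP n).sub hY), hreal n,
      ENNReal.ofReal_sub _ (integral_nonneg fun x => sq_nonneg _),
      sq_eLpNorm_two hY, sq_eLpNorm_two (hP n)]
  have hEeq : ∀ n, eLpNorm (μ[Y|ℱ n]) 2 μ ^ 2
      = ∫⁻ x, ENNReal.ofReal (((μ[Y|ℱ n]) x) ^ 2) ∂μ := by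
    intro n
    rw [sq_eLpNorm_two (hP n),
      ofReal_integral_eq_lintegral_ofReal (hP n).integrable_sq
        (Eventually.of_forall fun x => sq_nonneg _)]
  have hLeq : eLpNorm Y 2 μ ^ 2 = ∫⁻ x, ENNReal.ofReal ((Y x) ^ 2) ∂μ := by
    rw [sq_eLpNorm_two hY,
      ofReal_integral_eq_lintegral_ofReal hY.integrable_sq
        (Eventually.of_forall fun x => sq_nonneg _)]
  have hfatou : eLpNorm Y 2 μ ^ 2 ≤ liminf (fun n => eLpNorm (μ[Y|ℱ n]) 2 μ ^ 2) atTop := by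
    have hli : ∀ᵐ x ∂μ, ENNReal.ofReal ((Y x) ^ 2)
        = liminf (fun n => ENNReal.ofReal (((μ[Y|ℱ n]) x) ^ 2)) atTop := by
      filter_upwards [hae] with x hx
      have hten : Tendsto (fun n => ENNReal.ofReal (((μ[Y|ℱ n]) x) ^ 2)) atTop
          (𝓝 (ENNReal.ofReal ((Y x) ^ 2))) :=
        (ENNReal.continuous_ofReal.tendsto _).comp (((continuous_pow 2).tendsto _).comp hx)
      exact hten.liminf_eq.symm
    calc eLpNorm Y 2 μ ^ 2 = ∫⁻ x, ENNReal.ofReal ((Y x) ^ 2) ∂μ := hLeq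
      _ = ∫⁻ x, liminf (fun n => ENNReal.ofReal (((μ[Y|ℱ n]) x) ^ 2)) atTop ∂μ :=
          lintegral_congr_ae hli
      _ ≤ liminf (fun n => ∫⁻ x, ENNReal.ofReal (((μ[Y|ℱ n]) x) ^ 2) ∂μ) atTop :=
          lintegral_liminf_le fun n =>
            (((stronglyMeasurable_condExp.mono (ℱ.le n)).measurable.pow_const 2).ennreal_ofReal)
      _ = liminf (fun n => eLpNorm (μ[Y|ℱ n]) 2 μ ^ 2) atTop := by simp_rw [← hEeq]
  have hEt : Tendsto (fun n => eLpNorm (μ[Y|ℱ n]) 2 μ ^ 2) atTop (𝓝 (eLpNorm Y 2 μ ^ 2)) :=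
    tendsto_of_le_liminf_of_limsup_le hfatou (limsup_le_of_le (h := Eventually.of_forall hEL))
  have hdiff : Tendsto (fun n => eLpNorm ((μ[Y|ℱ n]) - Y) 2 μ ^ 2) atTop (𝓝 0) := by
    have h2 : Tendsto (fun n => eLpNorm Y 2 μ ^ 2 - eLpNorm (μ[Y|ℱ n]) 2 μ ^ 2) atTop
        (𝓝 (eLpNorm Y 2 μ ^ 2 - eLpNorm Y 2 μ ^ 2)) :=
      ENNReal.Tendsto.sub tendsto_const_nhds hEt (Or.inl hLt)
    rw [tsub_self] at h2
    simpa only [hsq] using h2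
  rw [ENNReal.tendsto_nhds_zero] at hdiff ⊢
  intro ε hε
  filter_upwards [hdiff (ε ^ 2) (ENNReal.pow_pos hε 2)] with n hn
  by_contra h
  push_neg at h
  exact absurd hn (not_le.2 (ENNReal.pow_lt_pow_left two_ne_zero h))

/-- Let `X` be càdlàg with `ℙ(ΔX_t ≠ 0) = 0` for every fixed `t`, and
`Xⁿ` its discretization along a refining sequence of subdivisions of `[0,T]` with mesh
tending to `0`. Then `Xⁿ_s → X_{s⁻} = X_s` a.s. for each fixed `s`, and the natural
filtrations satisfy `ℋⁿ_{t⁻} → ℋ_{t⁻}` in `L²` (`X` is of class `𝕏`). -/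
theorem stmt15 {Ω : Type*} {mΩ : MeasurableSpace Ω} (μ : Measure Ω) [IsProbabilityMeasure μ]
    (T : ℝ) (hT : 0 < T)
    (X : ℝ → Ω → ℝ) (hXmeas : ∀ s, Measurable (X s))
    -- càdlàg paths
    (hXrc : ∀ ω t, ContinuousWithinAt (fun s => X s ω) (Set.Ici t) t)
    (hXll : ∀ ω t, 0 < t → ∃ l : ℝ, Tendsto (fun s => X s ω) (nhdsWithin t (Set.Iio t)) (nhds l))
    -- no fixed time of discontinuity: `ℙ(ΔX_t ≠ 0) = 0` for each `t`
    (hnojump : ∀ t, 0 < t →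
      ∀ᵐ ω ∂μ, Tendsto (fun s => X s ω) (nhdsWithin t (Set.Iio t)) (nhds (X t ω)))
    -- the refining subdivisions `πⁿ = (tpt n 0 < ... < tpt n (k n))` of `[0,T]`
    (k : ℕ → ℕ) (tpt : ℕ → ℕ → ℝ)
    (hk : ∀ n, 0 < k n)
    (h0 : ∀ n, tpt n 0 = 0) (hTend : ∀ n, tpt n (k n) = T)
    (hptmono : ∀ n, StrictMonoOn (tpt n) (Set.Iic (k n)))
    (hrefine : ∀ n i, i ≤ k n → ∃ j ≤ k (n + 1), tpt (n + 1) j = tpt n i)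
    (hmesh : ∀ ε > 0, ∃ N, ∀ n ≥ N, ∀ i < k n, tpt n (i + 1) - tpt n i < ε)
    -- the discretized processes `Xⁿ`
    (Xn : ℕ → ℝ → Ω → ℝ)
    (hXn : ∀ n i, i < k n → ∀ s, tpt n i ≤ s → s < tpt n (i + 1) →
      ∀ ω, Xn n s ω = X (tpt n i) ω)
    (hXnT : ∀ n ω, Xn n T ω = X T ω) :
    -- (1) almost sure convergence at each fixed time
    (∀ s ∈ Set.Ioc 0 T, ∀ᵐ ω ∂μ, Tendsto (fun n => Xn n s ω) atTop (nhds (X s ω))) ∧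
    -- (2) convergence of the natural filtrations `ℋⁿ_{t⁻} → ℋ_{t⁻}` in `L²`
    (∀ t ∈ Set.Ioc 0 T, ∀ Y : Ω → ℝ, StronglyMeasurable[naturalσlt X t] Y → MemLp Y 2 μ →
      Tendsto (fun n => eLpNorm ((μ[Y | naturalσlt (Xn n) t]) - Y) 2 μ) atTop (nhds 0)) := by
  classical
  -- monotonicity of partition points
  have hmono : ∀ n, MonotoneOn (tpt n) (Set.Iic (k n)) := fun n => (hptmono n).monotoneOn
  have hpt0 : ∀ n i, i ≤ k n → 0 ≤ tpt n i := by
    intro n i hi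
    rw [← h0 n]
    exact hmono n (by simp : (0:ℕ) ∈ Set.Iic (k n)) hi (Nat.zero_le i)
  -- the index of the partition interval containing s
  have hidx : ∀ n, ∀ s : ℝ, 0 ≤ s → s < T → ∃ i, i < k n ∧ tpt n i ≤ s ∧ s < tpt n (i + 1) ∧
      ∀ ω, Xn n s ω = X (tpt n i) ω := by
    intro n s hs0 hsT
    set i := Nat.findGreatest (fun j => tpt n j ≤ s) (k n) with hi
    have h0i : tpt n 0 ≤ s := by rw [h0]; exact hs0
    have hspec : tpt n i ≤ s := by
      have := Nat.findGreatest_spec (P := fun j => tpt n j ≤ s) (Nat.zero_le (k n)) h0i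
      simpa [hi] using this
    have hik : i ≤ k n := Nat.findGreatest_le _
    have hlt : i < k n := by
      rcases lt_or_eq_of_le hik with h | h
      · exact h
      · exfalso; rw [h, hTend n] at hspec; exact absurd hspec (not_le.2 hsT)
    have hnot : ¬ tpt n (i + 1) ≤ s :=
      Nat.findGreatest_is_greatest (Nat.lt_succ_self i) (Nat.succ_le_of_lt hlt)
    exact ⟨i, hlt, hspec, not_le.1 hnot, fun ω => hXn n i hlt s hspec (not_le.1 hnot) ω⟩
  -- evaluation at partition points
  have hpt : ∀ n, ∀ s : ℝ, 0 ≤ s → s < T → (∃ j, j ≤ k n ∧ tpt n j = s) →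
      ∀ ω, Xn n s ω = X s ω := by
    rintro n s hs0 hsT ⟨j, hj, hjs⟩ ω
    obtain ⟨i, hik, hle, hlt, heq⟩ := hidx n s hs0 hsT
    have his : tpt n i = s := by
      by_contra h
      have h' : tpt n i < s := lt_of_le_of_ne hle h
      have hij : i < j := by
        by_contra hij
        push_neg at hij
        have := hmono n (Set.mem_Iic.2 hj) (Set.mem_Iic.2 hik.le) hij
        rw [hjs] at this
        exact absurd this (not_le.2 h')
      have h2 : tpt n (i + 1) ≤ tpt n j :=
        hmono n (Set.mem_Iic.2 hik) (Set.mem_Iic.2 hj) hij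
      rw [hjs] at h2
      exact absurd hlt (not_lt.2 h2)
    rw [heq ω, his]
  refine ⟨?_, ?_⟩
  · -- part (1)
    intro s hs
    obtain ⟨hs0, hsT⟩ := hs
    rcases hsT.lt_or_eq with hsT' | rfl
    · choose idx hik hle hlt heq using fun n => hidx n s hs0.le hsT'
      filter_upwards [hnojump s hs0] with ω hω
      have hwt : Tendsto (fun n => tpt n (idx n)) atTop (𝓝[Set.Iic s] s) := by
        refine tendsto_nhdsWithin_of_tendsto_nhds_of_eventually_within _ ?_
          (Eventually.of_forall fun n => Set.mem_Iic.2 (hle n))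
        rw [Metric.tendsto_atTop]
        intro ε hε
        obtain ⟨N, hN⟩ := hmesh ε hε
        refine ⟨N, fun n hn => ?_⟩
        have hm := hN n hn (idx n) (hik n)
        rw [Real.dist_eq, abs_sub_comm, abs_of_nonneg (sub_nonneg.2 (hle n))]
        linarith [hlt n]
      have hXtend : Tendsto (fun u => X u ω) (𝓝[Set.Iic s] s) (𝓝 (X s ω)) := by
        have hun : Set.Iic s = Set.Iio s ∪ {s} := (Set.Iio_union_right).symm
        rw [hun, nhdsWithin_union, nhdsWithin_singleton, tendsto_sup]
        exact ⟨hω, tendsto_pure_nhds _ s⟩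
      exact Tendsto.congr (fun n => (heq n ω).symm) (hXtend.comp hwt)
    · exact Eventually.of_forall fun ω => by
        simp only [hXnT]
        exact tendsto_const_nhds
  · -- part (2)
    intro t ht Y hYm hY2
    obtain ⟨ht0, htT⟩ := ht
    -- the filtration
    have hle' : ∀ n, naturalσlt (Xn n) t ≤ mΩ := by
      intro n
      refine iSup₂_le fun s hs => ?_
      obtain ⟨i, hik, hle, hlt, heq⟩ := hidx n s hs.1 (lt_of_lt_of_le hs.2 htT)
      have : (fun ω => Xn n s ω) = fun ω => X (tpt n i) ω := funext heq
      rw [this]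
      exact measurable_iff_comap_le.1 (hXmeas _)
    have hmono' : Monotone fun n => naturalσlt (Xn n) t := by
      refine monotone_nat_of_le_succ fun n => ?_
      refine iSup₂_le fun s hs => ?_
      obtain ⟨i, hik, hle, hlt, heq⟩ := hidx n s hs.1 (lt_of_lt_of_le hs.2 htT)
      have h1 : (fun ω => Xn n s ω) = fun ω => X (tpt n i) ω := funext heq
      have hpi0 : 0 ≤ tpt n i := hpt0 n i hik.le
      have hpit : tpt n i < t := lt_of_le_of_lt hle hs.2
      have h2 : ∀ ω, Xn (n + 1) (tpt n i) ω = X (tpt n i) ω := by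
        refine hpt (n + 1) (tpt n i) hpi0 (lt_of_lt_of_le hpit htT) ?_
        obtain ⟨j, hj, hji⟩ := hrefine n i hik.le
        exact ⟨j, hj, hji⟩
      have h3 : (fun ω => X (tpt n i) ω) = fun ω => Xn (n + 1) (tpt n i) ω :=
        (funext h2).symm
      rw [h1, h3]
      exact le_iSup₂ (f := fun (s : ℝ) (_ : s ∈ Set.Ico (0:ℝ) t) =>
        MeasurableSpace.comap (fun ω => Xn (n+1) s ω) inferInstance) (tpt n i) ⟨hpi0, hpit⟩
    set ℱ : Filtration ℕ mΩ := ⟨fun n => naturalσlt (Xn n) t, hmono', hle'⟩ with hℱ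
    -- the supremum of the filtration
    have hsup : (⨆ n, naturalσlt (Xn n) t) = naturalσlt X t := by
      apply le_antisymm
      · refine iSup_le fun n => iSup₂_le fun s hs => ?_
        obtain ⟨i, hik, hle, hlt, heq⟩ := hidx n s hs.1 (lt_of_lt_of_le hs.2 htT)
        have h1 : (fun ω => Xn n s ω) = fun ω => X (tpt n i) ω := funext heq
        rw [h1]
        exact le_iSup₂ (f := fun (s : ℝ) (_ : s ∈ Set.Ico (0:ℝ) t) =>
          MeasurableSpace.comap (fun ω => X s ω) inferInstance) (tpt n i)
          ⟨hpt0 n i hik.le, lt_of_le_of_lt hle hs.2⟩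
      · refine iSup₂_le fun s hs => ?_
        have hsT : s < T := lt_of_lt_of_le hs.2 htT
        suffices h : Measurable[⨆ n, naturalσlt (Xn n) t] (fun ω => X s ω) from
          measurable_iff_comap_le.1 h
        choose idx hik hle hlt heq using fun n => hidx n s hs.1 hsT
        set u : ℕ → ℝ := fun n => tpt n (idx n + 1) with hu
        have hut : Tendsto u atTop (𝓝 s) := by
          rw [Metric.tendsto_atTop]
          intro ε hε
          obtain ⟨N, hN⟩ := hmesh ε hε
          refine ⟨N, fun n hn => ?_⟩
          have hm := hN n hn (idx n) (hik n)
          rw [Real.dist_eq, abs_of_nonneg (sub_nonneg.2 (hlt n).le)]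
          linarith [hle n]
        have hevt : ∀ᶠ n in atTop, u n < t := hut.eventually (gt_mem_nhds hs.2)
        obtain ⟨N, hN⟩ := eventually_atTop.1 hevt
        have hmeas' : ∀ m : ℕ, Measurable[⨆ n, naturalσlt (Xn n) t] (fun ω => X (u (m + N)) ω) := by
          intro m
          have hu0 : 0 ≤ u (m + N) := hpt0 _ _ (hik (m + N))
          have hut' : u (m + N) < t := hN (m + N) (Nat.le_add_left N m)
          have heval : ∀ ω, Xn (m + N) (u (m + N)) ω = X (u (m + N)) ω :=
            hpt (m + N) (u (m + N)) hu0 (lt_of_lt_of_le hut' htT) ⟨idx (m + N) + 1, hik (m + N), rfl⟩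
          have h1 : (fun ω => X (u (m + N)) ω) = fun ω => Xn (m + N) (u (m + N)) ω :=
            (funext heval).symm
          rw [h1]
          have hcle : MeasurableSpace.comap (fun ω => Xn (m + N) (u (m + N)) ω) inferInstance
              ≤ ⨆ n, naturalσlt (Xn n) t := by
            refine le_trans ?_ (le_iSup _ (m + N))
            exact le_iSup₂ (f := fun (s : ℝ) (_ : s ∈ Set.Ico (0:ℝ) t) =>
              MeasurableSpace.comap (fun ω => Xn (m+N) s ω) inferInstance) (u (m + N)) ⟨hu0, hut'⟩
          exact measurable_iff_comap_le.2 hcle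
        refine @measurable_of_tendsto_metrizable Ω ℝ (⨆ n, naturalσlt (Xn n) t) _ _ _ _ _ _ hmeas' ?_
        rw [tendsto_pi_nhds]
        intro ω
        have hcomp : Tendsto (fun m => u (m + N)) atTop (𝓝[Set.Ici s] s) := by
          refine tendsto_nhdsWithin_of_tendsto_nhds_of_eventually_within _
            (hut.comp (tendsto_add_atTop_nat N))
            (Eventually.of_forall fun m => Set.mem_Ici.2 (hlt (m + N)).le)
        exact (hXrc ω s).tendsto.comp hcomp
    -- conclude with Lévy's theorem
    have hYm' : StronglyMeasurable[⨆ n, ℱ n] Y := by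
      have : (⨆ n, (ℱ n : MeasurableSpace Ω)) = naturalσlt X t := hsup
      rw [hℱ]
      exact this ▸ hYm
    exact levyL2 ℱ hYm' hY2
end
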